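/- Let φ : ℝ^d → ℝ be differentiable and satisfy, for constants 0 < m ≤ M and all u, v ∈ ℝ^d: ⟨∇φ(u) − ∇φ(v), u − v⟩ ≥ m ‖u − v‖² and ‖∇φ(u) − ∇φ(v)‖ ≤ M ‖u − v‖. Fix x ∈ ℝ^d, s ∈ ℝ^d with s ≠ 0, ε_g ≥ 0, and let y ∈ ℝ^d satisfy ‖y − (∇φ(x + s) − ∇φ(x))‖ ≤ 2 ε_g and ⟨s, y⟩ > 0. If additionally 2ε_g < m ‖s‖, then ⟨y, y⟩ / ⟨s, y⟩ ≤ M + 2ε_g / ‖s‖. -/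

import Mathlib

open InnerProductSpace intervalIntegral

section Helpers

variable {d : ℕ}

local notation "E" => EuclideanSpace ℝ (Fin d)

private lemma line_hasDerivAt (φ : E → ℝ) (hφ : Differentiable ℝ φ) (u v : E) (t : ℝ) :
    HasDerivAt (fun τ : ℝ => φ (u + τ • v))
      (inner ℝ (gradient φ (u + t • v)) v : ℝ) t := by
  have h1 : HasFDerivAt φ (toDual ℝ E (gradient φ (u + t • v))) (u + t • v) :=
    (hφ _).hasGradientAt.hasFDerivAt
  have h3 : HasDerivAt (fun τ : ℝ => u + τ • v) v t := by
    simpa using ((hasDerivAt_id t).smul_const v).const_add u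
  have h4 := h1.comp_hasDerivAt t h3
  rw [toDual_apply_apply] at h4
  exact h4

private lemma grad_continuous (φ : E → ℝ) (M : ℝ)
    (hlip : ∀ u v : E, ‖gradient φ u - gradient φ v‖ ≤ M * ‖u - v‖) :
    Continuous (gradient φ) := by
  rcases le_or_gt M 0 with hM | hM
  · have hconst : ∀ u : E, gradient φ u = gradient φ 0 := by
      intro u
      have h := hlip u 0
      have h2 : ‖gradient φ u - gradient φ 0‖ ≤ 0 :=
        h.trans (mul_nonpos_of_nonpos_of_nonneg hM (norm_nonneg _))
      have h3 := le_antisymm h2 (norm_nonneg _)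
      rwa [norm_eq_zero, sub_eq_zero] at h3
    have : (gradient φ) = fun _ : E => gradient φ 0 := funext hconst
    rw [this]; exact continuous_const
  · exact (LipschitzWith.of_dist_le_mul (K := ⟨M, hM.le⟩) (fun u v => by
      rw [dist_eq_norm, dist_eq_norm]; exact hlip u v)).continuous

private lemma int_linear (a b : ℝ) : ∫ t in (0:ℝ)..1, (a + b * t) = a + b / 2 := by
  have h1 : IntervalIntegrable (fun _ : ℝ => a) MeasureTheory.volume 0 1 :=
    intervalIntegrable_const
  have h2 : IntervalIntegrable (fun t : ℝ => b * t) MeasureTheory.volume 0 1 :=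
    (continuous_const.mul continuous_id).intervalIntegrable 0 1
  have h3 : (∫ t in (0:ℝ)..1, (a + b * t))
      = (∫ _ in (0:ℝ)..1, a) + ∫ t in (0:ℝ)..1, b * t :=
    intervalIntegral.integral_add h1 h2
  have h4 : (∫ t in (0:ℝ)..1, b * t) = b * ∫ t in (0:ℝ)..1, t :=
    intervalIntegral.integral_const_mul b _
  rw [h3, h4, integral_id, intervalIntegral.integral_const]
  simp
  ring

private lemma chord_bounds (φ : E → ℝ) (hφ : Differentiable ℝ φ)
    (m M : ℝ)
    (hconv : ∀ u v : E, (inner ℝ (gradient φ u - gradient φ v) (u - v) : ℝ) ≥ m * ‖u - v‖ ^ 2)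
    (hlip : ∀ u v : E, ‖gradient φ u - gradient φ v‖ ≤ M * ‖u - v‖)
    (a b : E) :
    φ a + inner ℝ (gradient φ a) (b - a) + m / 2 * ‖b - a‖ ^ 2 ≤ φ b ∧
      φ b ≤ φ a + inner ℝ (gradient φ a) (b - a) + M / 2 * ‖b - a‖ ^ 2 := by
  set g := gradient φ with hg
  set u := a with hu
  set v := b - a with hv
  have hb : b = u + v := by simp [hv, hu]
  have hcont : Continuous g := grad_continuous φ M hlip
  have hderiv : ∀ t ∈ Set.uIcc (0:ℝ) 1,
      HasDerivAt (fun τ : ℝ => φ (u + τ • v)) (inner ℝ (g (u + t • v)) v : ℝ) t :=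
    fun t _ => line_hasDerivAt φ hφ u v t
  have hcont2 : Continuous fun t : ℝ => (inner ℝ (g (u + t • v)) v : ℝ) :=
    (hcont.comp (continuous_const.add (continuous_id.smul continuous_const))).inner
      continuous_const
  have hint : IntervalIntegrable (fun t : ℝ => (inner ℝ (g (u + t • v)) v : ℝ))
      MeasureTheory.volume 0 1 := hcont2.intervalIntegrable 0 1
  have hftc : ∫ t in (0:ℝ)..1, (inner ℝ (g (u + t • v)) v : ℝ) = φ (u + v) - φ u := by
    have := intervalIntegral.integral_eq_sub_of_hasDerivAt hderiv hint
    simpa using this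
  have hlb : ∀ t ∈ Set.Icc (0:ℝ) 1,
      (inner ℝ (g u) v : ℝ) + (m * ‖v‖ ^ 2) * t ≤ (inner ℝ (g (u + t • v)) v : ℝ) := by
    intro t ht
    rcases eq_or_lt_of_le ht.1 with h0 | h0
    · simp [← h0]
    · have h := hconv (u + t • v) u
      have hsub : u + t • v - u = t • v := by abel
      rw [hsub] at h
      have he : (inner ℝ (g (u + t • v) - g u) (t • v) : ℝ)
          = t * (inner ℝ (g (u + t • v) - g u) v : ℝ) := real_inner_smul_right _ _ _
      have hns : ‖t • v‖ ^ 2 = t ^ 2 * ‖v‖ ^ 2 := by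
        rw [norm_smul, mul_pow, Real.norm_eq_abs, sq_abs]
      rw [he, hns] at h
      have h3 : (inner ℝ (g (u + t • v) - g u) v : ℝ)
          = (inner ℝ (g (u + t • v)) v : ℝ) - (inner ℝ (g u) v : ℝ) := inner_sub_left _ _ _
      rw [h3] at h
      nlinarith [h]
  have hub : ∀ t ∈ Set.Icc (0:ℝ) 1,
      (inner ℝ (g (u + t • v)) v : ℝ) ≤ (inner ℝ (g u) v : ℝ) + (M * ‖v‖ ^ 2) * t := by
    intro t ht
    have h3 : (inner ℝ (g (u + t • v) - g u) v : ℝ)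
        = (inner ℝ (g (u + t • v)) v : ℝ) - (inner ℝ (g u) v : ℝ) := inner_sub_left _ _ _
    have hC : (inner ℝ (g (u + t • v) - g u) v : ℝ) ≤ ‖g (u + t • v) - g u‖ * ‖v‖ :=
      real_inner_le_norm _ _
    have hL : ‖g (u + t • v) - g u‖ ≤ M * ‖u + t • v - u‖ := hlip _ _
    have hsub : u + t • v - u = t • v := by abel
    rw [hsub, norm_smul, Real.norm_eq_abs, abs_of_nonneg ht.1] at hL
    rw [h3] at hC
    nlinarith [norm_nonneg v, norm_nonneg (g (u + t • v) - g u), hC, hL]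
  have hilb : IntervalIntegrable (fun t : ℝ => (inner ℝ (g u) v : ℝ) + (m * ‖v‖ ^ 2) * t)
      MeasureTheory.volume 0 1 :=
    (continuous_const.add (continuous_const.mul continuous_id)).intervalIntegrable 0 1
  have hiub : IntervalIntegrable (fun t : ℝ => (inner ℝ (g u) v : ℝ) + (M * ‖v‖ ^ 2) * t)
      MeasureTheory.volume 0 1 :=
    (continuous_const.add (continuous_const.mul continuous_id)).intervalIntegrable 0 1
  have hIlb : (inner ℝ (g u) v : ℝ) + (m * ‖v‖ ^ 2) / 2 ≤ φ (u + v) - φ u := by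
    have := intervalIntegral.integral_mono_on (by norm_num : (0:ℝ) ≤ 1) hilb hint hlb
    rwa [hftc, int_linear] at this
  have hIub : φ (u + v) - φ u ≤ (inner ℝ (g u) v : ℝ) + (M * ‖v‖ ^ 2) / 2 := by
    have := intervalIntegral.integral_mono_on (by norm_num : (0:ℝ) ≤ 1) hint hiub hub
    rwa [hftc, int_linear] at this
  rw [← hb] at hIlb hIub
  constructor
  · linarith
  · linarith

set_option maxHeartbeats 1000000 in
private lemma master_ineq (φ : E → ℝ) (hφ : Differentiable ℝ φ)
    (m M : ℝ)
    (hconv : ∀ u v : E, (inner ℝ (gradient φ u - gradient φ v) (u - v) : ℝ) ≥ m * ‖u - v‖ ^ 2)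
    (hlip : ∀ u v : E, ‖gradient φ u - gradient φ v‖ ≤ M * ‖u - v‖)
    (u v : E) (τ : ℝ) :
    2 * τ * ‖gradient φ v - gradient φ u - m • (v - u)‖ ^ 2 ≤
      (inner ℝ (gradient φ v - gradient φ u - m • (v - u)) (v - u) : ℝ)
        + (M - m) * τ ^ 2 * ‖gradient φ v - gradient φ u - m • (v - u)‖ ^ 2 := by
  obtain ⟨A, -⟩ := chord_bounds φ hφ m M hconv hlip u
    (v - τ • (gradient φ v - gradient φ u - m • (v - u)))
  obtain ⟨-, B⟩ := chord_bounds φ hφ m M hconv hlip v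
    (v - τ • (gradient φ v - gradient φ u - m • (v - u)))
  obtain ⟨A', -⟩ := chord_bounds φ hφ m M hconv hlip v
    (u + τ • (gradient φ v - gradient φ u - m • (v - u)))
  obtain ⟨-, B'⟩ := chord_bounds φ hφ m M hconv hlip u
    (u + τ • (gradient φ v - gradient φ u - m • (v - u)))
  have hsq : ∀ z : E, ‖z‖ ^ 2 = (inner ℝ z z : ℝ) := fun z => (real_inner_self_eq_norm_sq z).symm
  simp only [hsq, inner_sub_left, inner_sub_right, inner_add_left,
    inner_add_right, real_inner_smul_left, real_inner_smul_right,
    real_inner_comm v u, real_inner_comm (gradient φ u) u, real_inner_comm (gradient φ v) u,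
    real_inner_comm (gradient φ u) v, real_inner_comm (gradient φ v) v,
    real_inner_comm (gradient φ v) (gradient φ u)] at A B A' B' ⊢
  linarith [A, B, A', B']

private lemma key_ineq (φ : E → ℝ) (hφ : Differentiable ℝ φ)
    (m M : ℝ) (hmM : m ≤ M)
    (hconv : ∀ u v : E, (inner ℝ (gradient φ u - gradient φ v) (u - v) : ℝ) ≥ m * ‖u - v‖ ^ 2)
    (hlip : ∀ u v : E, ‖gradient φ u - gradient φ v‖ ≤ M * ‖u - v‖)
    (u v : E) :
    ‖gradient φ v - gradient φ u - m • (v - u)‖ ^ 2 ≤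
      (M - m) * (inner ℝ (gradient φ v - gradient φ u - m • (v - u)) (v - u) : ℝ) := by
  set q : E := gradient φ v - gradient φ u - m • (v - u) with hq
  rcases eq_or_lt_of_le hmM with hEq | hLt
  · have hq0 : ‖q‖ ^ 2 = 0 := by
      by_contra h
      have hq2 : 0 < ‖q‖ ^ 2 := lt_of_le_of_ne (by positivity) (Ne.symm h)
      have hma := master_ineq φ hφ m M hconv hlip u v
        (((inner ℝ q (v - u) : ℝ) + 1) / (2 * ‖q‖ ^ 2))
      rw [← hq, ← hEq, sub_self, zero_mul, zero_mul, add_zero] at hma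
      have hexp : 2 * (((inner ℝ q (v - u) : ℝ) + 1) / (2 * ‖q‖ ^ 2)) * ‖q‖ ^ 2
          = (inner ℝ q (v - u) : ℝ) + 1 := by
        have hq1 : ‖q‖ ≠ 0 := by intro h0; apply h; rw [h0]; ring
        field_simp
      rw [hexp] at hma
      linarith
    rw [hq0, ← hEq]
    simp
  · have hM : 0 < M - m := by linarith
    have hma := master_ineq φ hφ m M hconv hlip u v (1 / (M - m))
    rw [← hq] at hma
    have h2 : (M - m) * (1 / (M - m)) ^ 2 = 1 / (M - m) := by
      field_simp
    rw [h2] at hma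
    have h4 : (1 / (M - m)) * ‖q‖ ^ 2 ≤ (inner ℝ q (v - u) : ℝ) := by linarith
    calc ‖q‖ ^ 2 = (M - m) * ((1 / (M - m)) * ‖q‖ ^ 2) := by field_simp
    _ ≤ (M - m) * (inner ℝ q (v - u) : ℝ) := mul_le_mul_of_nonneg_left h4 hM.le

end Helpers

set_option maxHeartbeats 1000000 in
/-- Case 1 in the proof of Lemma 3.1: if `2 ε_g < m ‖s‖`, then
`⟨y, y⟩ / ⟨s, y⟩ ≤ M + 2 ε_g / ‖s‖`. -/
theorem noisy_curvature_upper_bound_case1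
    {d : ℕ} (φ : EuclideanSpace ℝ (Fin d) → ℝ) (hφ : Differentiable ℝ φ)
    (m M : ℝ) (hm : 0 < m) (hmM : m ≤ M)
    (hconv : ∀ u v : EuclideanSpace ℝ (Fin d),
      (inner ℝ (gradient φ u - gradient φ v) (u - v) : ℝ) ≥ m * ‖u - v‖ ^ 2)
    (hlip : ∀ u v : EuclideanSpace ℝ (Fin d),
      ‖gradient φ u - gradient φ v‖ ≤ M * ‖u - v‖)
    (x s : EuclideanSpace ℝ (Fin d)) (hs : s ≠ 0)
    (εg : ℝ) (hεg : 0 ≤ εg)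
    (y : EuclideanSpace ℝ (Fin d))
    (hy : ‖y - (gradient φ (x + s) - gradient φ x)‖ ≤ 2 * εg)
    (hsy : (inner ℝ s y : ℝ) > 0)
    (hcase : 2 * εg < m * ‖s‖) :
    (inner ℝ y y : ℝ) / (inner ℝ s y : ℝ) ≤ M + 2 * εg / ‖s‖ := by
  have hns : (0:ℝ) < ‖s‖ := norm_pos_iff.mpr hs
  set Δ : EuclideanSpace ℝ (Fin d) := gradient φ (x + s) - gradient φ x with hΔ
  set t : ℝ := 2 * εg / ‖s‖ with ht
  have ht0 : 0 ≤ t := by positivity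
  have htm : t < m := by
    rw [ht, div_lt_iff₀ hns]
    linarith [hcase]
  set c : ℝ := M + t with hc
  have hkey := key_ineq φ hφ m M hmM hconv hlip x (x + s)
  have hxs : x + s - x = s := by abel
  rw [hxs, ← hΔ] at hkey
  set q : EuclideanSpace ℝ (Fin d) := Δ - m • s with hq
  have hL : (0:ℝ) ≤ M - m := by linarith
  have h1 : ‖q - ((M - m) / 2) • s‖ ^ 2 ≤ ((M - m) / 2 * ‖s‖) ^ 2 := by
    have e1 : ‖q - ((M - m) / 2) • s‖ ^ 2
        = ‖q‖ ^ 2 - (M - m) * (inner ℝ q s : ℝ) + ((M - m) / 2) ^ 2 * ‖s‖ ^ 2 := by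
      rw [norm_sub_sq_real, real_inner_smul_right, norm_smul]
      rw [mul_pow, Real.norm_eq_abs, sq_abs]
      ring
    rw [e1, mul_pow]
    linarith [hkey]
  have h2 : ‖q - ((M - m) / 2) • s‖ ≤ (M - m) / 2 * ‖s‖ := by
    nlinarith [norm_nonneg (q - ((M - m) / 2) • s),
      mul_nonneg (by linarith : (0:ℝ) ≤ (M - m)/2) hns.le, h1]
  have hdecomp : y - (c / 2) • s
      = (y - Δ) + (q - ((M - m) / 2) • s) + (((m - t) / 2) • s) := by
    rw [hq, hc]
    have hcoef : ((M + t) / 2 : ℝ) = (m : ℝ) + (M - m) / 2 - (m - t) / 2 := by ring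
    rw [hcoef]
    simp only [sub_smul, add_smul]
    abel
  have h3 : ‖y - (c / 2) • s‖ ≤ 2 * εg + (M - m) / 2 * ‖s‖ + (m - t) / 2 * ‖s‖ := by
    rw [hdecomp]
    have e2 : ‖((m - t) / 2) • s‖ = (m - t) / 2 * ‖s‖ := by
      rw [norm_smul, Real.norm_eq_abs, abs_of_nonneg (by linarith : (0:ℝ) ≤ (m - t)/2)]
    calc ‖(y - Δ) + (q - ((M - m) / 2) • s) + (((m - t) / 2) • s)‖
        ≤ ‖(y - Δ) + (q - ((M - m) / 2) • s)‖ + ‖((m - t) / 2) • s‖ := norm_add_le _ _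
      _ ≤ ‖y - Δ‖ + ‖q - ((M - m) / 2) • s‖ + ‖((m - t) / 2) • s‖ := by
          linarith [norm_add_le (y - Δ) (q - ((M - m) / 2) • s)]
      _ ≤ 2 * εg + (M - m) / 2 * ‖s‖ + (m - t) / 2 * ‖s‖ := by
          rw [e2]
          exact add_le_add (add_le_add hy h2) le_rfl
  have hte : t * ‖s‖ = 2 * εg := by
    rw [ht]; field_simp
  have h4 : ‖y - (c / 2) • s‖ ≤ c / 2 * ‖s‖ := by
    have heq : 2 * εg + (M - m) / 2 * ‖s‖ + (m - t) / 2 * ‖s‖ = c / 2 * ‖s‖ := by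
      rw [hc, ← hte]; ring
    linarith [h3, heq.le]
  have h5 : ‖y - (c / 2) • s‖ ^ 2 ≤ (c / 2 * ‖s‖) ^ 2 := by
    nlinarith [h4, norm_nonneg (y - (c / 2) • s)]
  have e3 : ‖y - (c / 2) • s‖ ^ 2
      = ‖y‖ ^ 2 - c * (inner ℝ y s : ℝ) + (c / 2) ^ 2 * ‖s‖ ^ 2 := by
    rw [norm_sub_sq_real, real_inner_smul_right, norm_smul]
    rw [mul_pow, Real.norm_eq_abs, sq_abs]
    ring
  rw [e3, mul_pow] at h5
  have e4 : (inner ℝ y y : ℝ) = ‖y‖ ^ 2 := real_inner_self_eq_norm_sq y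
  have e5 : (inner ℝ y s : ℝ) = (inner ℝ s y : ℝ) := real_inner_comm s y
  rw [div_le_iff₀ hsy]
  have hcc : c = M + 2 * εg / ‖s‖ := by rw [hc, ht]
  nlinarith [h5, e4, e5, hcc]
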